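/- Let h be an FDH function with first difference r, h̃(n) = max_{m ≥ n} (h(m) + (n-m)·r(m)), and t(n) the largest maximizer. Then for every n, r(t(n-1)) ≤ h̃(n) - h̃(n-1) ≤ r(t(n)) (interpreting r(+∞) as the rank ρ of h). In particular n ↦ r(t(n)) is nondecreasing, and the function t is nondecreasing. -/

import Mathlib

open Finset

/-- First difference `r(n) = h(n) - h(n-1)`. -/
def dr (h : ℤ → ℤ) (n : ℤ) : ℤ := h n - h (n - 1)

/-- An FDH function: nonnegative, nondecreasing first differences nonnegative,
vanishing for `n ≪ 0`, eventually linear `ρ n + σ` with `ρ ≥ 0`. -/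
def IsFDH (h : ℤ → ℤ) : Prop :=
  (∀ n, 0 ≤ h n) ∧ (∀ n, 0 ≤ dr h n) ∧ (∃ N : ℤ, ∀ n ≤ N, h n = 0) ∧
  (∃ ρ σ : ℤ, 0 ≤ ρ ∧ ∃ N : ℤ, ∀ n ≥ N, h n = ρ * n + σ)

/-- Torsion-free: `r(m) ≥ 1` implies `r(n) ≥ 1` for all `n ≥ m`. -/
def TorsionFree (h : ℤ → ℤ) : Prop := ∀ m n : ℤ, m ≤ n → 1 ≤ dr h m → 1 ≤ dr h n

/-- `ht` is the function `h̃(n) = max_{m ≥ n} (h(m) + (n-m) r(m))`. -/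
def TildeSpec (h ht : ℤ → ℤ) : Prop :=
  ∀ n : ℤ, IsGreatest {v : ℤ | ∃ m : ℤ, n ≤ m ∧ v = h m + (n - m) * dr h m} (ht n)

/-- `t n` is the largest maximizer of `m ↦ h(m) + (n-m) r(m)` over `m ≥ n`,
equal to `⊤` when the set of maximizers is unbounded. -/
def TSpec (h ht : ℤ → ℤ) (t : ℤ → WithTop ℤ) : Prop :=
  ∀ n : ℤ,
    (∀ m : ℤ, n ≤ m → ht n = h m + (n - m) * dr h m → (m : WithTop ℤ) ≤ t n) ∧
    (∀ τ : ℤ, t n = (τ : WithTop ℤ) → n ≤ τ ∧ ht n = h τ + (n - τ) * dr h τ) ∧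
    (t n = ⊤ → ∀ M : ℤ, ∃ m : ℤ, M ≤ m ∧ n ≤ m ∧ ht n = h m + (n - m) * dr h m)

/-- Extension of `dr h` to `WithTop`, with value `rho` at `top`. -/
def rext (h : ℤ → ℤ) (ρ : ℤ) : WithTop ℤ → ℤ :=
  fun x => match x with | ⊤ => ρ | (k : ℤ) => dr h k

/-- r(t(n-1)) <= htilde(n) - htilde(n-1) <= r(t(n)) (with r(top)=rho);
hence r o t and t are nondecreasing. -/
theorem tilde_diff_bounds (h ht : ℤ → ℤ) (t : ℤ → WithTop ℤ) (ρ σ : ℤ)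
    (hF : IsFDH h) (hρ : 0 ≤ ρ) (hlin : ∃ N : ℤ, ∀ n ≥ N, h n = ρ * n + σ)
    (hT : TildeSpec h ht) (ht' : TSpec h ht t) :
    (∀ n : ℤ, rext h ρ (t (n - 1)) ≤ ht n - ht (n - 1) ∧
      ht n - ht (n - 1) ≤ rext h ρ (t n)) ∧
    Monotone (fun n => rext h ρ (t n)) ∧ Monotone t := by
  obtain ⟨N, hN⟩ := hlin
  have hub : ∀ n m : ℤ, n ≤ m → h m + (n - m) * dr h m ≤ ht n :=
    fun n m hm => (hT n).2 ⟨m, hm, rfl⟩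
  have hdrρ : ∀ m : ℤ, N + 1 ≤ m → dr h m = ρ := by
    intro m hm
    have h1 : h m = ρ * m + σ := hN m (by linarith)
    have h2 : h (m - 1) = ρ * (m - 1) + σ := hN (m - 1) (by linarith)
    unfold dr; rw [h1, h2]; ring
  -- t n ≥ n + 1 whenever finite
  have hB : ∀ n τ : ℤ, t n = (τ : WithTop ℤ) → n + 1 ≤ τ := by
    intro n τ hτ
    obtain ⟨hnτ, heq⟩ := (ht' n).2.1 τ hτ
    by_contra hc
    have hτn : τ = n := by omega
    have hval : h (n + 1) + (n - (n + 1)) * dr h (n + 1) = h n := by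
      unfold dr; rw [show n + 1 - 1 = n by ring]; ring
    have hhtn : ht n = h n := by rw [heq, hτn]; ring
    have h2 := (ht' n).1 (n + 1) (by linarith) (by rw [hval, hhtn])
    rw [hτ, hτn] at h2
    exact absurd (WithTop.coe_le_coe.mp h2) (by omega)
  -- Key lemma: beyond the largest maximizer, r strictly exceeds r(t n)
  have hL : ∀ n τ : ℤ, t n = (τ : WithTop ℤ) → ∀ m : ℤ, τ + 1 ≤ m →
      dr h τ + 1 ≤ dr h m ∧ h τ + (m - τ) * (dr h τ + 1) ≤ h m := by
    intro n τ hτ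
    obtain ⟨hnτ, heq⟩ := (ht' n).2.1 τ hτ
    refine fun m hm => Int.le_induction (motive := fun m _ =>
        dr h τ + 1 ≤ dr h m ∧ h τ + (m - τ) * (dr h τ + 1) ≤ h m) ?_ ?_ m hm
    ·
      have hd1 : dr h (τ + 1) = h (τ + 1) - h τ := by
        unfold dr; rw [show τ + 1 - 1 = τ by ring]
      have hdr : dr h τ + 1 ≤ dr h (τ + 1) := by
        by_contra hc
        have hle : dr h (τ + 1) ≤ dr h τ := by omega
        have hval : h (τ + 1) + (n - (τ + 1)) * dr h (τ + 1)
            = h τ + (n - τ) * dr h (τ + 1) := by rw [hd1]; ring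
        have key : (n - τ) * dr h τ ≤ (n - τ) * dr h (τ + 1) :=
          mul_le_mul_of_nonpos_left hle (by linarith)
        have hge : ht n ≤ h (τ + 1) + (n - (τ + 1)) * dr h (τ + 1) := by
          rw [hval, heq]; linarith
        have hle2 := hub n (τ + 1) (by linarith)
        have heq2 : ht n = h (τ + 1) + (n - (τ + 1)) * dr h (τ + 1) :=
          le_antisymm hge hle2
        have h2 := (ht' n).1 (τ + 1) (by linarith) heq2
        rw [hτ] at h2
        exact absurd (WithTop.coe_le_coe.mp h2) (by omega)
      exact ⟨hdr, by nlinarith [hd1, hdr]⟩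
    · intro m hm ih
      obtain ⟨ih1, ih2⟩ := ih
      have hdm : dr h (m + 1) = h (m + 1) - h m := by
        unfold dr; rw [show m + 1 - 1 = m by ring]
      have hdr : dr h τ + 1 ≤ dr h (m + 1) := by
        by_contra hc
        have hle : dr h (m + 1) ≤ dr h τ := by omega
        have hub2 := hub n (m + 1) (by linarith)
        rw [heq] at hub2
        have key : (n - m) * dr h τ ≤ (n - m) * dr h (m + 1) :=
          mul_le_mul_of_nonpos_left hle (by linarith)
        nlinarith [hub2, hdm, key, ih2]
      refine ⟨hdr, ?_⟩
      nlinarith [hdm, hdr, ih2]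
  -- Upper bound
  have hA : ∀ n : ℤ, ht (n + 1) - ht n ≤ rext h ρ (t (n + 1)) := by
    intro n
    cases htc : t (n + 1) with
    | top =>
      obtain ⟨m, hm1, hm2, heqm⟩ := (ht' (n + 1)).2.2 htc (N + 1)
      have hhm : h m = ρ * m + σ := hN m (by linarith)
      have hdm : dr h m = ρ := hdrρ m hm1
      have h1 : ht (n + 1) = ρ * (n + 1) + σ := by rw [heqm, hhm, hdm]; ring
      have h2 := hub n m (by linarith)
      rw [hhm, hdm] at h2
      show ht (n + 1) - ht n ≤ ρ
      nlinarith [h1, h2]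
    | coe τ =>
      obtain ⟨hle, heqτ⟩ := (ht' (n + 1)).2.1 τ htc
      have h2 := hub n τ (by linarith)
      show ht (n + 1) - ht n ≤ dr h τ
      nlinarith [heqτ, h2]
  -- Lower bound
  have hC : ∀ n : ℤ, rext h ρ (t n) ≤ ht (n + 1) - ht n := by
    intro n
    cases htc : t n with
    | top =>
      obtain ⟨m, hm1, hm2, heqm⟩ := (ht' n).2.2 htc (max (N + 1) (n + 1))
      have hmN : N + 1 ≤ m := le_trans (le_max_left _ _) hm1
      have hmn : n + 1 ≤ m := le_trans (le_max_right _ _) hm1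
      have hhm : h m = ρ * m + σ := hN m (by linarith)
      have hdm : dr h m = ρ := hdrρ m hmN
      have h1 : ht n = ρ * n + σ := by rw [heqm, hhm, hdm]; ring
      have h2 := hub (n + 1) m hmn
      rw [hhm, hdm] at h2
      show ρ ≤ ht (n + 1) - ht n
      nlinarith [h1, h2]
    | coe τ =>
      obtain ⟨hle, heqτ⟩ := (ht' n).2.1 τ htc
      have hτ1 : n + 1 ≤ τ := hB n τ htc
      have h2 := hub (n + 1) τ hτ1
      show dr h τ ≤ ht (n + 1) - ht n
      nlinarith [heqτ, h2]
  -- Monotonicity of t on consecutive integers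
  have hstep : ∀ n : ℤ, t n ≤ t (n + 1) := by
    intro n
    cases h1 : t (n + 1) with
    | top => exact le_top
    | coe τ' =>
      cases h0 : t n with
      | top =>
        exfalso
        have c := hC n; rw [h0] at c
        have a := hA n; rw [h1] at a
        have hm : N + 1 ≤ max (τ' + 1) (N + 1) := le_max_right _ _
        have hm2 : τ' + 1 ≤ max (τ' + 1) (N + 1) := le_max_left _ _
        have hL1 := (hL (n + 1) τ' h1 (max (τ' + 1) (N + 1)) hm2).1
        have hρ1 := hdrρ _ hm
        have ha' : ht (n + 1) - ht n ≤ dr h τ' := a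
        have hc' : ρ ≤ ht (n + 1) - ht n := c
        rw [hρ1] at hL1
        linarith
      | coe τ =>
        have : τ ≤ τ' := by
          by_contra hcc
          push_neg at hcc
          have hL1 := (hL (n + 1) τ' h1 τ (by omega)).1
          have c := hC n; rw [h0] at c
          have a := hA n; rw [h1] at a
          have ha' : ht (n + 1) - ht n ≤ dr h τ' := a
          have hc' : dr h τ ≤ ht (n + 1) - ht n := c
          linarith
        exact_mod_cast this
  refine ⟨?_, ?_, monotone_int_of_le_succ hstep⟩
  · intro n
    have a := hA (n - 1)
    have c := hC (n - 1)
    rw [show n - 1 + 1 = n by ring] at a c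
    exact ⟨c, a⟩
  · apply monotone_int_of_le_succ
    intro n
    have a := hA n
    have c := hC n
    exact le_trans c a
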